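/- For every positive integer α, the generating function of Q_{4α}^α satisfies ∑_{n≥0} Q_{4α}^α(n) q^n ≡ (q;q)_∞ (q^α;q^α)_∞ (mod 2). -/

import Mathlib

/-- `Q t s n` is the number of partitions of `n` into distinct parts such that
no part is congruent to `s` or `t - s` modulo `t`. -/
noncomputable def Q (t s n : ℕ) : ℕ :=
  Nat.card {p : n.Partition // p.parts.Nodup ∧
    ∀ x ∈ p.parts, x % t ≠ s % t ∧ x % t ≠ (t - s) % t}

/-- The power series whose `n`-th coefficient is the `n`-th coefficient of the
partial product `∏_{i < n+1} g i`; for products whose `i`-th factor is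
`1 + O(q^(i+1))` this represents the infinite product `∏_i g i`. -/
noncomputable def prodSeries (g : ℕ → PowerSeries ℤ) : PowerSeries ℤ :=
  PowerSeries.mk fun n => PowerSeries.coeff n (∏ i ∈ Finset.range (n + 1), g i)

/-- `(q^k; q^k)_∞ = ∏_{i ≥ 1} (1 - q^(k*i))` as a formal power series over `ℤ`. -/
noncomputable def fE (k : ℕ) : PowerSeries ℤ :=
  prodSeries fun i => 1 - PowerSeries.X ^ (k * (i + 1))

/-- `(-q^s; q^t)_∞ = ∏_{i ≥ 0} (1 + q^(s + t*i))` as a formal power series over `ℤ`. -/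
noncomputable def negPoch (s t : ℕ) : PowerSeries ℤ :=
  prodSeries fun i => 1 + PowerSeries.X ^ (s + t * i)


open PowerSeries Finset
open scoped Classical

namespace Stmt11Aux


noncomputable section

/-- A convenience constructor for the power series whose coefficients indicate a subset. -/
def indicatorSeries (α : Type*) [Semiring α] (s : Set ℕ) : PowerSeries α :=
  PowerSeries.mk fun n => if n ∈ s then 1 else 0

theorem coeff_indicator {α : Type*} (s : Set ℕ) [Semiring α] (n : ℕ) :
    coeff n (indicatorSeries α s) = if n ∈ s then 1 else 0 :=
  coeff_mk _ _

-- The main workhorse (copied from Archive/Wiedijk100Theorems/Partition.lean).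
theorem partialGF_prop (α : Type*) [CommSemiring α] (n : ℕ) (s : Finset ℕ) (hs : ∀ i ∈ s, 0 < i)
    (c : ℕ → Set ℕ) (hc : ∀ i, i ∉ s → 0 ∈ c i) :
    #{p : n.Partition | (∀ j, p.parts.count j ∈ c j) ∧ ∀ j ∈ p.parts, j ∈ s} =
      coeff n (∏ i ∈ s, indicatorSeries α ((· * i) '' c i)) := by
  simp_rw [coeff_prod, coeff_indicator, prod_boole, sum_boole]
  apply congr_arg
  simp only [mem_univ, forall_true_left, not_and, not_forall, exists_prop,
    Set.mem_image, not_exists]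
  set φ : (a : Nat.Partition n) →
    a ∈ filter (fun p ↦ (∀ (j : ℕ), Multiset.count j p.parts ∈ c j) ∧ ∀ j ∈ p.parts, j ∈ s) univ →
    ℕ →₀ ℕ := fun p _ => {
      toFun := fun i => Multiset.count i p.parts • i
      support := Finset.filter (fun i => i ≠ 0) p.parts.toFinset
      mem_support_toFun := fun a => by
        simp only [smul_eq_mul, ne_eq, mul_eq_zero, Multiset.count_eq_zero]
        rw [not_or, not_not]
        simp only [Multiset.mem_toFinset, not_not, mem_filter] }
  refine Finset.card_bij φ ?_ ?_ ?_
  · intro a ha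
    simp only [φ, not_forall, not_exists, not_and, exists_prop, mem_filter]
    rw [mem_finsuppAntidiag]
    dsimp only [ne_eq, smul_eq_mul, id_eq, eq_mpr_eq_cast, le_eq_subset, Finsupp.coe_mk]
    simp only [mem_univ, forall_true_left, not_and, not_forall, exists_prop,
      mem_filter, true_and] at ha
    refine ⟨⟨?_, fun i ↦ ?_⟩, fun i _ ↦ ⟨a.parts.count i, ha.1 i, rfl⟩⟩
    · conv_rhs => simp [← a.parts_sum]
      rw [sum_multiset_count_of_subset _ s]
      · simp only [smul_eq_mul]
      · intro i
        simp only [Multiset.mem_toFinset, not_not, mem_filter]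
        apply ha.2
    · simp only [ne_eq, Multiset.mem_toFinset, not_not, mem_filter, and_imp]
      exact fun hi _ ↦ ha.2 i hi
  · intro p₁ hp₁ p₂ hp₂ h
    apply Nat.Partition.ext
    simp only [true_and, mem_univ, mem_filter] at hp₁ hp₂
    ext i
    simp only [φ, ne_eq, Multiset.mem_toFinset, not_not, smul_eq_mul, Finsupp.mk.injEq] at h
    by_cases hi : i = 0
    · rw [hi]
      rw [Multiset.count_eq_zero_of_notMem]
      · rw [Multiset.count_eq_zero_of_notMem]
        intro a; exact Nat.lt_irrefl 0 (hs 0 (hp₂.2 0 a))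
      intro a; exact Nat.lt_irrefl 0 (hs 0 (hp₁.2 0 a))
    · rw [← mul_left_inj' hi]
      rw [funext_iff] at h
      exact h.2 i
  · simp only [φ, mem_filter, mem_finsuppAntidiag, mem_univ, exists_prop, true_and, and_assoc]
    rintro f ⟨hf, hf₃, hf₄⟩
    have hf' : f ∈ finsuppAntidiag s n := mem_finsuppAntidiag.mpr ⟨hf, hf₃⟩
    simp only [mem_finsuppAntidiag] at hf'
    refine ⟨⟨∑ i ∈ s, Multiset.replicate (f i / i) i, ?_, ?_⟩, ?_, ?_, ?_⟩
    · intro i hi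
      simp only [exists_prop, Multiset.mem_sum, mem_map, Function.Embedding.coeFn_mk] at hi
      rcases hi with ⟨t, ht, z⟩
      apply hs
      rwa [Multiset.eq_of_mem_replicate z]
    · simp_rw [Multiset.sum_sum, Multiset.sum_replicate, Nat.nsmul_eq_mul]
      rw [← hf'.1]
      refine sum_congr rfl fun i hi => Nat.div_mul_cancel ?_
      rcases hf₄ i hi with ⟨w, _, hw₂⟩
      rw [← hw₂]
      exact dvd_mul_left _ _
    · intro i
      simp_rw [Multiset.count_sum', Multiset.count_replicate, sum_ite_eq']
      split_ifs with h
      · rcases hf₄ i h with ⟨w, hw₁, hw₂⟩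
        rwa [← hw₂, Nat.mul_div_cancel _ (hs i h)]
      · exact hc _ h
    · intro i hi
      rw [Multiset.mem_sum] at hi
      rcases hi with ⟨j, hj₁, hj₂⟩
      rwa [Multiset.eq_of_mem_replicate hj₂]
    · ext i
      simp_rw [Multiset.count_sum', Multiset.count_replicate, sum_ite_eq']
      simp only [ne_eq, Multiset.mem_toFinset, not_not, smul_eq_mul, ite_mul,
        zero_mul, Finsupp.coe_mk]
      split_ifs with h
      · apply Nat.div_mul_cancel
        rcases hf₄ i h with ⟨w, _, hw₂⟩
        apply Dvd.intro_left _ hw₂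
      · apply symm
        rw [← Finsupp.notMem_support_iff]
        exact notMem_mono hf'.2 h

theorem indicator_pair {α : Type*} [Semiring α] (i : ℕ) (hi : 0 < i) :
    indicatorSeries α {0, i} = 1 + (X : PowerSeries α) ^ i := by
  obtain ⟨j, rfl⟩ := Nat.exists_eq_add_of_lt hi
  rw [zero_add]
  ext n
  simp only [coeff_indicator, coeff_one, coeff_X_pow, Set.mem_insert_iff, Set.mem_singleton_iff,
    map_add]
  cases' n with d
  · simp [(Nat.succ_ne_zero j).symm]
  · simp [Nat.succ_ne_zero d]

end



/-- Congruence of power series modulo `X^N`. -/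
def XC {R : Type*} [CommRing R] (N : ℕ) (f g : PowerSeries R) : Prop :=
  (X : PowerSeries R) ^ N ∣ f - g

variable {R : Type*} [CommRing R] {N : ℕ}

theorem XC.refl (f : PowerSeries R) : XC N f f := by simp [XC]

theorem XC.symm {f g : PowerSeries R} (h : XC N f g) : XC N g f := by
  rw [XC, ← neg_sub f g]
  exact h.neg_right

theorem XC.trans {f g h : PowerSeries R} (h₁ : XC N f g) (h₂ : XC N g h) : XC N f h := by
  have := dvd_add h₁ h₂
  simpa [XC] using this

theorem XC.mul {f g f' g' : PowerSeries R} (h : XC N f g) (h' : XC N f' g') :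
    XC N (f * f') (g * g') := by
  have : f * f' - g * g' = f * (f' - g') + (f - g) * g' := by ring
  rw [XC, this]
  exact dvd_add (Dvd.dvd.mul_left h' f) (Dvd.dvd.mul_right h g')

theorem XC.prod {ι : Type*} {s : Finset ι} {f g : ι → PowerSeries R}
    (h : ∀ i ∈ s, XC N (f i) (g i)) : XC N (∏ i ∈ s, f i) (∏ i ∈ s, g i) := by
  classical
  induction s using Finset.induction_on with
  | empty => simpa using XC.refl 1
  | @insert a s' hx ih =>
    rw [Finset.prod_insert hx, Finset.prod_insert hx]
    exact (h a (mem_insert_self a s')).mul (ih fun i hi => h i (mem_insert_of_mem hi))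

theorem XC.coeff_eq {f g : PowerSeries R} (h : XC N f g) {a : ℕ} (ha : a < N) :
    coeff a f = coeff a g := by
  rw [XC] at h
  have := (PowerSeries.X_pow_dvd_iff.mp h) a ha
  rw [map_sub, sub_eq_zero] at this
  exact this

theorem XC.one_add_pow {k : ℕ} (hk : N ≤ k) (u : R) :
    XC N (1 + PowerSeries.C u * X ^ k) 1 := by
  rw [XC, add_sub_cancel_left]
  exact Dvd.dvd.mul_left (pow_dvd_pow _ hk) _

theorem XC.one_add_pow' {k : ℕ} (hk : N ≤ k) :
    XC N (1 + (X : PowerSeries R) ^ k) 1 := by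
  simpa using XC.one_add_pow (R := R) hk 1


theorem coeff_prodSeries (g : ℕ → PowerSeries ℤ) (u : ℕ → ℤ) (d : ℕ → ℕ)
    (hg : ∀ i, g i = 1 + PowerSeries.C (u i) * X ^ d i) (hd : ∀ i, i < d i)
    {a N : ℕ} (h : a < N) :
    coeff a (prodSeries g) = coeff a (∏ i ∈ Finset.range N, g i) := by
  rw [prodSeries, coeff_mk]
  have key : ∀ M, a + 1 ≤ M →
      coeff a (∏ i ∈ range M, g i) = coeff a (∏ i ∈ range (a + 1), g i) := by
    intro M hM
    induction M, hM using Nat.le_induction with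
    | base => rfl
    | succ M hM ih =>
      rw [Finset.prod_range_succ, hg M, mul_add, mul_one, map_add, ih]
      have hz : coeff a ((∏ i ∈ range M, g i) * (PowerSeries.C (u M) * X ^ d M)) = 0 := by
        rw [show (∏ i ∈ range M, g i) * (PowerSeries.C (u M) * X ^ d M)
            = PowerSeries.C (u M) * ((∏ i ∈ range M, g i) * X ^ d M) by ring,
          coeff_C_mul, coeff_mul_X_pow']
        rw [if_neg (by have := hd M; omega)]
        ring
      rw [hz, add_zero]
  rw [key N h]

theorem two_eq_zero : (2 : PowerSeries (ZMod 2)) = 0 := by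
  rw [← map_ofNat (PowerSeries.C (R := ZMod 2)) 2]
  have : (2 : ZMod 2) = 0 := rfl
  rw [this, map_zero]

theorem sq_one_add (e : ℕ) : (1 + (X : PowerSeries (ZMod 2)) ^ e) ^ 2 = 1 + X ^ (2 * e) := by
  have h := add_pow_two (1 : PowerSeries (ZMod 2)) (X ^ e)
  rw [h, two_eq_zero, ← pow_mul, mul_comm e 2]
  ring

/-- full product `∏_{m=1}^{n} (1 + X^(β m))` over `ZMod 2`. -/
noncomputable def Pa (n β : ℕ) : PowerSeries (ZMod 2) := ∏ m ∈ Ioc 0 n, (1 + X ^ (β * m))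

/-- odd-index product `∏_{m=1}^{n}, m odd, (1 + X^(β m))` over `ZMod 2`. -/
noncomputable def Po (n β : ℕ) : PowerSeries (ZMod 2) :=
  ∏ m ∈ (Ioc 0 n).filter (fun m => m % 2 = 1), (1 + X ^ (β * m))

theorem descent (n : ℕ) : ∀ F β, 0 < β → n < 2 ^ F * β → XC (n + 1) (Pa n β * Po n β) 1 := by
  intro F
  induction F with
  | zero =>
    intro β hβ hn
    rw [pow_zero, one_mul] at hn
    have h1 : XC (n + 1) (Pa n β) 1 := by
      refine XC.prod (g := fun _ => 1) (fun m hm => ?_) |>.trans (by rw [prod_const_one]; exact XC.refl 1)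
      rw [mem_Ioc] at hm
      exact XC.one_add_pow' (by nlinarith [hm.1, hm.2])
    have h2 : XC (n + 1) (Po n β) 1 := by
      refine XC.prod (g := fun _ => 1) (fun m hm => ?_) |>.trans (by rw [prod_const_one]; exact XC.refl 1)
      rw [mem_filter, mem_Ioc] at hm
      exact XC.one_add_pow' (by nlinarith [hm.1.1, hm.1.2])
    simpa using h1.mul h2
  | succ F ihF =>
    intro β hβ hn
    have ih : XC (n + 1) (Pa n (2 * β) * Po n (2 * β)) 1 := by
      refine ihF (2 * β) (by omega) ?_
      calc n < 2 ^ (F + 1) * β := hn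
        _ = 2 ^ F * (2 * β) := by ring
    -- E : even part
    set E : PowerSeries (ZMod 2) :=
      ∏ m ∈ (Ioc 0 n).filter (fun m => ¬ m % 2 = 1), (1 + X ^ (β * m)) with hE
    have hsplit : Po n β * E = Pa n β :=
      Finset.prod_filter_mul_prod_filter_not (Ioc 0 n) (fun m => m % 2 = 1) _
    have hsq : Po n β ^ 2 = Po n (2 * β) := by
      rw [Po, ← Finset.prod_pow]
      refine Finset.prod_congr rfl fun m _ => ?_
      rw [sq_one_add, ← mul_assoc]
    -- E reindexed
    have hre : E = ∏ m' ∈ Ioc 0 (n / 2), (1 + (X : PowerSeries (ZMod 2)) ^ (2 * β * m')) := by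
      rw [hE]
      refine Finset.prod_nbij' (fun m => m / 2) (fun m' => 2 * m') ?_ ?_ ?_ ?_ ?_
      · intro m hm
        simp only [mem_filter, mem_Ioc] at hm ⊢
        omega
      · intro m' hm'
        simp only [mem_filter, mem_Ioc] at hm' ⊢
        omega
      · intro m hm
        simp only [mem_filter, mem_Ioc] at hm
        show 2 * (m / 2) = m
        omega
      · intro m' _
        show 2 * m' / 2 = m'
        omega
      · intro m hm
        simp only [mem_filter, mem_Ioc] at hm
        have h2 : 2 * (m / 2) = m := by omega
        show (1 : PowerSeries (ZMod 2)) + X ^ (β * m) = 1 + X ^ (2 * β * (m / 2))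
        rw [show 2 * β * (m / 2) = β * (2 * (m / 2)) by ring, h2]
    have htail : XC (n + 1) (Pa n (2 * β)) E := by
      have hc : (∏ m ∈ Ioc 0 (n / 2), (1 + (X : PowerSeries (ZMod 2)) ^ (2 * β * m))) *
          ∏ m ∈ Ioc (n / 2) n, (1 + (X : PowerSeries (ZMod 2)) ^ (2 * β * m)) = Pa n (2 * β) :=
        Finset.prod_Ioc_consecutive _ (Nat.zero_le _) (Nat.div_le_self n 2)
      have h1 : XC (n + 1) (∏ m ∈ Ioc (n / 2) n, (1 + (X : PowerSeries (ZMod 2)) ^ (2 * β * m))) 1 := by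
        refine XC.prod (g := fun _ => 1) (fun m hm => ?_) |>.trans (by rw [prod_const_one]; exact XC.refl 1)
        rw [mem_Ioc] at hm
        refine XC.one_add_pow' ?_
        have h2m : n + 1 ≤ 2 * m := by omega
        calc n + 1 ≤ 2 * m := h2m
          _ ≤ 2 * β * m := by nlinarith
      rw [← hc, hre]
      have := (XC.refl (R := ZMod 2)
        (∏ m ∈ Ioc 0 (n / 2), (1 + (X : PowerSeries (ZMod 2)) ^ (2 * β * m)))).mul h1
      simpa using this
    have main : Pa n β * Po n β = Po n (2 * β) * E := by
      rw [← hsplit, ← hsq]; ring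
    rw [main]
    refine (XC.mul (XC.refl (Po n (2 * β))) htail.symm).trans ?_
    refine XC.trans ?_ ih
    rw [mul_comm]
    exact XC.refl _


/-- The set of allowed parts up to `n`. -/
def Sall (a n : ℕ) : Finset ℕ :=
  (Finset.Ioc 0 n).filter fun k =>
    k % (4 * a) ≠ a % (4 * a) ∧ k % (4 * a) ≠ (4 * a - a) % (4 * a)

theorem mod_char {a : ℕ} (ha : 0 < a) (k : ℕ) :
    (k % (4 * a) = a % (4 * a) ∨ k % (4 * a) = (4 * a - a) % (4 * a)) ↔
      ∃ m, m % 2 = 1 ∧ k = a * m := by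
  have h4 : a % (4 * a) = a := Nat.mod_eq_of_lt (by omega)
  have h3 : (4 * a - a) % (4 * a) = 3 * a := by
    rw [show 4 * a - a = 3 * a by omega]
    exact Nat.mod_eq_of_lt (by omega)
  constructor
  · rintro (h | h)
    · have hqm : 4 * a * (k / (4 * a)) + k % (4 * a) = k := Nat.div_add_mod k (4 * a)
      rw [h, h4] at hqm
      obtain ⟨q, hq⟩ : ∃ q, 4 * a * q + a = k := ⟨_, hqm⟩
      refine ⟨4 * q + 1, by omega, ?_⟩
      rw [← hq]; ring
    · have hqm : 4 * a * (k / (4 * a)) + k % (4 * a) = k := Nat.div_add_mod k (4 * a)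
      rw [h, h3] at hqm
      obtain ⟨q, hq⟩ : ∃ q, 4 * a * q + 3 * a = k := ⟨_, hqm⟩
      refine ⟨4 * q + 3, by omega, ?_⟩
      rw [← hq]; ring
  · rintro ⟨m, hm2, rfl⟩
    have hm : m % 4 = 1 ∨ m % 4 = 3 := by omega
    rcases hm with hm | hm
    · left
      obtain ⟨q, rfl⟩ : ∃ q, m = 4 * q + 1 := ⟨m / 4, by omega⟩
      rw [show a * (4 * q + 1) = a + 4 * a * q by ring, Nat.add_mul_mod_self_left]
    · right
      obtain ⟨q, rfl⟩ : ∃ q, m = 4 * q + 3 := ⟨m / 4, by omega⟩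
      rw [h3, show a * (4 * q + 3) = 3 * a + 4 * a * q by ring, Nat.add_mul_mod_self_left]
      exact Nat.mod_eq_of_lt (by omega)

/-- The forbidden-part product is congruent to `Po n a`. -/
theorem forbidden_prod {a : ℕ} (ha : 0 < a) (n : ℕ) :
    XC (n + 1)
      (∏ k ∈ (Finset.Ioc 0 n).filter (fun k =>
          ¬(k % (4 * a) ≠ a % (4 * a) ∧ k % (4 * a) ≠ (4 * a - a) % (4 * a))),
        (1 + (X : PowerSeries (ZMod 2)) ^ k))
      (Po n a) := by
  have hmem : ∀ k ∈ (Finset.Ioc 0 n).filter (fun k =>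
      ¬(k % (4 * a) ≠ a % (4 * a) ∧ k % (4 * a) ≠ (4 * a - a) % (4 * a))),
      ∃ m, m % 2 = 1 ∧ k = a * m ∧ k ≤ n := by
    intro k hk
    simp only [mem_filter, mem_Ioc, not_and, not_not, ne_eq] at hk
    obtain ⟨⟨hk0, hkn⟩, hmod⟩ := hk
    have hor : k % (4 * a) = a % (4 * a) ∨ k % (4 * a) = (4 * a - a) % (4 * a) := by
      by_cases h1 : k % (4 * a) = a % (4 * a)
      · exact Or.inl h1
      · exact Or.inr (hmod h1)
    obtain ⟨m, hm2, hkm⟩ := (mod_char ha k).mp hor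
    exact ⟨m, hm2, hkm, hkn⟩
  have hre : (∏ k ∈ (Finset.Ioc 0 n).filter (fun k =>
          ¬(k % (4 * a) ≠ a % (4 * a) ∧ k % (4 * a) ≠ (4 * a - a) % (4 * a))),
        (1 + (X : PowerSeries (ZMod 2)) ^ k)) =
      ∏ m ∈ (Finset.Ioc 0 (n / a)).filter (fun m => m % 2 = 1),
        (1 + (X : PowerSeries (ZMod 2)) ^ (a * m)) := by
    refine Finset.prod_nbij' (fun k => k / a) (fun m => a * m) ?_ ?_ ?_ ?_ ?_
    · intro k hk
      obtain ⟨m, hm2, rfl, hkn⟩ := hmem k hk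
      simp only [mem_filter, mem_Ioc]
      rw [Nat.mul_div_cancel_left m ha]
      refine ⟨⟨by omega, ?_⟩, hm2⟩
      rw [Nat.le_div_iff_mul_le ha, mul_comm]
      exact hkn
    · intro m hm
      simp only [mem_filter, mem_Ioc] at hm ⊢
      obtain ⟨⟨hm0, hmn⟩, hm2⟩ := hm
      have hle : a * m ≤ n := by
        rw [Nat.le_div_iff_mul_le ha] at hmn
        rwa [mul_comm]
      refine ⟨⟨by positivity, hle⟩, ?_⟩
      intro hcon
      rcases (mod_char ha (a * m)).mpr ⟨m, hm2, rfl⟩ with h | h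
      · exact absurd h hcon.1
      · exact absurd h hcon.2
    · intro k hk
      obtain ⟨m, hm2, rfl, hkn⟩ := hmem k hk
      show a * (a * m / a) = a * m
      rw [Nat.mul_div_cancel_left m ha]
    · intro m _
      show a * m / a = m
      rw [Nat.mul_div_cancel_left m ha]
    · intro k hk
      obtain ⟨m, hm2, rfl, hkn⟩ := hmem k hk
      show (1 : PowerSeries (ZMod 2)) + X ^ (a * m) = 1 + X ^ (a * (a * m / a))
      rw [Nat.mul_div_cancel_left m ha]
  rw [hre]
  have hPo : Po n a =
      (∏ m ∈ (Finset.Ioc 0 (n / a)).filter (fun m => m % 2 = 1),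
        (1 + (X : PowerSeries (ZMod 2)) ^ (a * m))) *
      ∏ m ∈ (Finset.Ioc (n / a) n).filter (fun m => m % 2 = 1),
        (1 + (X : PowerSeries (ZMod 2)) ^ (a * m)) := by
    rw [Po, ← Finset.prod_union]
    · congr 1
      rw [← Finset.filter_union]
      congr 1
      exact (Finset.Ioc_union_Ioc_eq_Ioc (Nat.zero_le _) (Nat.div_le_self n a)).symm
    · refine Finset.disjoint_filter_filter ?_
      rw [Finset.disjoint_left]
      intro x hx hx'
      rw [mem_Ioc] at hx hx'
      omega
  have htail : XC (n + 1)
      (∏ m ∈ (Finset.Ioc (n / a) n).filter (fun m => m % 2 = 1),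
        (1 + (X : PowerSeries (ZMod 2)) ^ (a * m))) 1 := by
    refine XC.prod (g := fun _ => 1) (fun m hm => ?_) |>.trans
      (by rw [prod_const_one]; exact XC.refl 1)
    rw [mem_filter, mem_Ioc] at hm
    refine XC.one_add_pow' ?_
    have hlt : n < m * a := (Nat.div_lt_iff_lt_mul ha).mp hm.1.1
    rw [mul_comm] at hlt
    omega
  rw [hPo]
  have hc := (XC.refl (R := ZMod 2)
    (∏ m ∈ (Finset.Ioc 0 (n / a)).filter (fun m => m % 2 = 1),
      (1 + (X : PowerSeries (ZMod 2)) ^ (a * m)))).mul htail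
  rw [mul_one] at hc
  exact hc.symm

/-- The key product identity mod 2. -/
theorem key2 {a : ℕ} (ha : 0 < a) (n : ℕ) :
    XC (n + 1) (Pa n 1 * Pa n a)
      (∏ k ∈ Sall a n, (1 + (X : PowerSeries (ZMod 2)) ^ k)) := by
  have hsplit : (∏ k ∈ Sall a n, (1 + (X : PowerSeries (ZMod 2)) ^ k)) *
      (∏ k ∈ (Finset.Ioc 0 n).filter (fun k =>
          ¬(k % (4 * a) ≠ a % (4 * a) ∧ k % (4 * a) ≠ (4 * a - a) % (4 * a))),
        (1 + (X : PowerSeries (ZMod 2)) ^ k)) = Pa n 1 := by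
    rw [Sall, Finset.prod_filter_mul_prod_filter_not, Pa]
    exact Finset.prod_congr rfl fun m _ => by rw [one_mul]
  have hd : XC (n + 1) (Pa n a * Po n a) 1 := by
    refine descent n (n + 1) a ha ?_
    have h1 : n < 2 ^ (n + 1) :=
      lt_of_lt_of_le ((Nat.lt_two_pow_self (n := n))) (Nat.pow_le_pow_right (by norm_num) (by omega))
    calc n < 2 ^ (n + 1) := h1
      _ = 2 ^ (n + 1) * 1 := by ring
      _ ≤ 2 ^ (n + 1) * a := Nat.mul_le_mul_left _ ha
  rw [← hsplit]
  have h1 := forbidden_prod ha n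
  have step1 : XC (n + 1)
      ((∏ k ∈ Sall a n, (1 + (X : PowerSeries (ZMod 2)) ^ k)) *
        (∏ k ∈ (Finset.Ioc 0 n).filter (fun k =>
          ¬(k % (4 * a) ≠ a % (4 * a) ∧ k % (4 * a) ≠ (4 * a - a) % (4 * a))),
        (1 + (X : PowerSeries (ZMod 2)) ^ k)) * Pa n a)
      ((∏ k ∈ Sall a n, (1 + (X : PowerSeries (ZMod 2)) ^ k)) * (Po n a * Pa n a)) := by
    have := ((XC.refl (∏ k ∈ Sall a n, (1 + (X : PowerSeries (ZMod 2)) ^ k))).mul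
      (h1.mul (XC.refl (Pa n a))))
    rw [← mul_assoc] at this
    exact this
  refine step1.trans ?_
  have step2 : XC (n + 1)
      ((∏ k ∈ Sall a n, (1 + (X : PowerSeries (ZMod 2)) ^ k)) * (Po n a * Pa n a))
      ((∏ k ∈ Sall a n, (1 + (X : PowerSeries (ZMod 2)) ^ k)) * 1) := by
    refine (XC.refl _).mul ?_
    rw [mul_comm]
    exact hd
  refine step2.trans ?_
  rw [mul_one]
  exact XC.refl _

theorem Q_eq_card (a n : ℕ) :
    Q (4 * a) a n = #{p : n.Partition |
      (∀ j, p.parts.count j ∈ ({0, 1} : Set ℕ)) ∧ ∀ j ∈ p.parts, j ∈ Sall a n} := by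
  rw [Q, Nat.card_eq_fintype_card, Fintype.card_subtype]
  congr 1
  apply Finset.filter_congr
  intro p _
  have hmem : ∀ x ∈ p.parts, 0 < x ∧ x ≤ n := fun x hx =>
    ⟨p.parts_pos hx, by
      simpa [p.parts_sum] using Multiset.single_le_sum (fun _ _ => Nat.zero_le _) _ hx⟩
  constructor
  · rintro ⟨hnd, hall⟩
    refine ⟨fun j => ?_, fun j hj => ?_⟩
    · have := Multiset.nodup_iff_count_le_one.mp hnd j
      simp only [Set.mem_insert_iff, Set.mem_singleton_iff]
      omega
    · rw [Sall, mem_filter, mem_Ioc]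
      exact ⟨⟨(hmem j hj).1, (hmem j hj).2⟩, hall j hj⟩
  · rintro ⟨hcount, hall⟩
    refine ⟨Multiset.nodup_iff_count_le_one.mpr fun j => ?_, fun x hx => ?_⟩
    · have := hcount j
      simp only [Set.mem_insert_iff, Set.mem_singleton_iff] at this
      omega
    · have := hall x hx
      rw [Sall, mem_filter] at this
      exact this.2

theorem Q_coeff {a : ℕ} (ha : 0 < a) (n : ℕ) :
    ((Q (4 * a) a n : ZMod 2)) =
      coeff n (∏ k ∈ Sall a n, (1 + (X : PowerSeries (ZMod 2)) ^ k)) := by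
  rw [Q_eq_card]
  rw [partialGF_prop (ZMod 2) n (Sall a n)
    (fun i hi => by rw [Sall, mem_filter, mem_Ioc] at hi; exact hi.1.1)
    (fun _ => {0, 1}) (fun _ _ => Or.inl rfl)]
  refine congrArg _ (Finset.prod_congr rfl fun i hi => ?_)
  have hipos : 0 < i := by rw [Sall, mem_filter, mem_Ioc] at hi; exact hi.1.1
  rw [show ((· * i) '' {0, 1} : Set ℕ) = {0, i} by rw [Set.image_pair]; simp]
  exact indicator_pair i hipos

theorem neg_X_pow (e : ℕ) : (1 : PowerSeries (ZMod 2)) - X ^ e = 1 + X ^ e := by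
  have h : (X : PowerSeries (ZMod 2)) ^ e + X ^ e = 0 := by
    rw [← two_mul, two_eq_zero, zero_mul]
  rw [sub_eq_add_neg, neg_eq_of_add_eq_zero_left h]

theorem coeff_map_fE {k : ℕ} (hk : 0 < k) {a n : ℕ} (han : a ≤ n) :
    coeff a (PowerSeries.map (Int.castRingHom (ZMod 2)) (fE k)) =
      coeff a
        (∏ i ∈ range (n + 1), (1 + (X : PowerSeries (ZMod 2)) ^ (k * (i + 1)))) := by
  rw [coeff_map, fE,
    coeff_prodSeries (fun i => 1 - X ^ (k * (i + 1))) (fun _ => -1) (fun i => k * (i + 1))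
      (fun i => by rw [map_neg, map_one]; ring)
      (fun i => lt_of_lt_of_le (Nat.lt_succ_self i) (Nat.le_mul_of_pos_left _ hk))
      (show a < n + 1 by omega),
    ← coeff_map, map_prod]
  refine congrArg _ (Finset.prod_congr rfl fun i _ => ?_)
  rw [map_sub, map_one, map_pow, PowerSeries.map_X, neg_X_pow]

theorem Mk_xc {k : ℕ} (hk : 0 < k) (n : ℕ) :
    XC (n + 1) (∏ i ∈ range (n + 1), (1 + (X : PowerSeries (ZMod 2)) ^ (k * (i + 1))))
      (Pa n k) := by
  have hre : (∏ i ∈ range (n + 1), (1 + (X : PowerSeries (ZMod 2)) ^ (k * (i + 1)))) =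
      ∏ m ∈ Ioc 0 (n + 1), (1 + (X : PowerSeries (ZMod 2)) ^ (k * m)) := by
    rw [← Finset.Icc_add_one_left_eq_Ioc, ← Finset.Ico_add_one_right_eq_Icc, Finset.prod_Ico_eq_prod_range]
    rw [show (n + 1 + 1 - (0 + 1) : ℕ) = n + 1 by omega]
    exact Finset.prod_congr rfl fun i _ => by rw [zero_add, add_comm 1 i]
  rw [hre, Finset.prod_Ioc_succ_top (Nat.zero_le n)]
  have h1 : XC (n + 1) (1 + (X : PowerSeries (ZMod 2)) ^ (k * (n + 1))) 1 :=
    XC.one_add_pow' (le_trans (le_refl _) (Nat.le_mul_of_pos_left _ hk))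
  have := (XC.refl (R := ZMod 2)
    (∏ m ∈ Ioc 0 n, (1 + (X : PowerSeries (ZMod 2)) ^ (k * m)))).mul h1
  rw [mul_one] at this
  exact this

theorem coeff_mul_congr {R : Type*} [CommSemiring R] {n : ℕ} {F F' G G' : PowerSeries R}
    (hF : ∀ a ≤ n, coeff a F = coeff a F')
    (hG : ∀ a ≤ n, coeff a G = coeff a G') :
    coeff n (F * G) = coeff n (F' * G') := by
  rw [coeff_mul, coeff_mul]
  refine Finset.sum_congr rfl fun p hp => ?_
  rw [Finset.HasAntidiagonal.mem_antidiagonal] at hp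
  rw [hF p.1 (by omega), hG p.2 (by omega)]

end Stmt11Aux

open Stmt11Aux in
theorem stmt11 (α : ℕ) (hα : 0 < α) (n : ℕ) :
    PowerSeries.coeff n (PowerSeries.mk fun m => (Q (4 * α) α m : ℤ)) ≡
      PowerSeries.coeff n (fE 1 * fE α) [ZMOD 2] := by
  suffices h : ((PowerSeries.coeff n (PowerSeries.mk fun m => (Q (4 * α) α m : ℤ)) : ℤ) :
      ZMod 2) = ((PowerSeries.coeff n (fE 1 * fE α) : ℤ) : ZMod 2) by
    have h2 := (ZMod.intCast_eq_intCast_iff _ _ 2).mp h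
    exact_mod_cast h2
  have hlhs : ((PowerSeries.coeff n (PowerSeries.mk fun m => (Q (4 * α) α m : ℤ)) : ℤ) :
      ZMod 2) = ((Q (4 * α) α n : ZMod 2)) := by
    rw [PowerSeries.coeff_mk]
    push_cast
    ring
  rw [hlhs, Q_coeff hα n]
  have hrhs : ((PowerSeries.coeff n (fE 1 * fE α) : ℤ) : ZMod 2) =
      coeff n (PowerSeries.map (Int.castRingHom (ZMod 2)) (fE 1 * fE α)) :=
    (PowerSeries.coeff_map (Int.castRingHom (ZMod 2)) n (fE 1 * fE α)).symm
  rw [hrhs, map_mul]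
  rw [coeff_mul_congr (fun a ha => coeff_map_fE one_pos ha)
    (fun a ha => coeff_map_fE hα ha)]
  rw [((Mk_xc one_pos n).mul (Mk_xc hα n)).coeff_eq (Nat.lt_succ_self n)]
  exact ((key2 hα n).coeff_eq (Nat.lt_succ_self n)).symm
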